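/- Let n ≥ 2 be an integer. The function Θ ↦ (1/Θⁿ)·∫₀^Θ sinh(θ)^{n−1} dθ is strictly increasing for Θ ∈ (0, ∞). -/
import Mathlib

open Real Set intervalIntegral

lemma sinh_lt_mul_cosh {x : ℝ} (hx : 0 < x) : Real.sinh x < x * Real.cosh x := by
  have h : StrictMonoOn (fun y : ℝ => y * Real.cosh y - Real.sinh y) (Set.Ici 0) := by
    apply strictMonoOn_of_deriv_pos (convex_Ici 0)
    · fun_prop
    · intro y hy
      rw [interior_Ici, Set.mem_Ioi] at hy
      have hd : HasDerivAt (fun y : ℝ => y * Real.cosh y - Real.sinh y)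
          (1 * Real.cosh y + y * Real.sinh y - Real.cosh y) y :=
        ((hasDerivAt_id y).mul (Real.hasDerivAt_cosh y)).sub (Real.hasDerivAt_sinh y)
      rw [hd.deriv]
      have := Real.sinh_pos_iff.mpr hy
      nlinarith
  have := h (Set.self_mem_Ici) (Set.mem_Ici.mpr hx.le) hx
  simpa using this

theorem ball_volume_ratio_strictMonoOn (n : ℕ) (hn : 2 ≤ n) :
    StrictMonoOn
      (fun Θ : ℝ => (1 / Θ ^ n) * ∫ θ in (0 : ℝ)..Θ, Real.sinh θ ^ (n - 1))
      (Set.Ioi 0) := by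
  have hcont : Continuous fun θ : ℝ => Real.sinh θ ^ (n - 1) := Real.continuous_sinh.pow _
  set F : ℝ → ℝ := fun Θ => ∫ θ in (0 : ℝ)..Θ, Real.sinh θ ^ (n - 1) with hFdef
  have hF : ∀ x : ℝ, HasDerivAt F (Real.sinh x ^ (n - 1)) x := by
    intro x
    exact intervalIntegral.integral_hasDerivAt_right (hcont.intervalIntegrable 0 x)
      (hcont.stronglyMeasurableAtFilter _ _) hcont.continuousAt
  -- key positivity: x * sinh x ^ (n-1) - n * F x > 0 for x > 0
  have hG : ∀ x : ℝ, 0 < x → 0 < x * Real.sinh x ^ (n - 1) - n * F x := by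
    have hmono : StrictMonoOn (fun x : ℝ => x * Real.sinh x ^ (n - 1) - n * F x) (Set.Ici 0) := by
      apply strictMonoOn_of_deriv_pos (convex_Ici 0)
      · apply Continuous.continuousOn
        have hFc : Continuous F := continuous_iff_continuousAt.mpr
          fun x => (hF x).differentiableAt.continuousAt
        exact Continuous.sub (by fun_prop) (continuous_const.mul hFc)
      · intro x hx
        rw [interior_Ici, Set.mem_Ioi] at hx
        have hd : HasDerivAt (fun x : ℝ => x * Real.sinh x ^ (n - 1) - n * F x)
            (1 * Real.sinh x ^ (n - 1) +
              x * ((n - 1 : ℕ) * Real.sinh x ^ (n - 1 - 1) * Real.cosh x)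
              - n * Real.sinh x ^ (n - 1)) x := by
          exact ((hasDerivAt_id x).mul ((Real.hasDerivAt_sinh x).pow (n - 1))).sub
            ((hF x).const_mul (n : ℝ))
        rw [hd.deriv]
        have hs := Real.sinh_pos_iff.mpr hx
        have hc := sinh_lt_mul_cosh hx
        have h1 : Real.sinh x ^ (n - 1) = Real.sinh x ^ (n - 2) * Real.sinh x := by
          rw [← pow_succ]
          congr 1
          omega
        have h2 : (n - 1 : ℕ) - 1 = n - 2 := by omega
        have h3 : ((n - 1 : ℕ) : ℝ) = (n : ℝ) - 1 := by
          have : (1 : ℕ) ≤ n := by omega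
          push_cast [Nat.cast_sub this]
          ring
        rw [h2, h1, h3]
        have hsp : 0 < Real.sinh x ^ (n - 2) := pow_pos hs _
        have hn1 : (1 : ℝ) ≤ (n : ℝ) - 1 := by
          have : (2 : ℝ) ≤ (n : ℝ) := by exact_mod_cast hn
          linarith
        nlinarith [mul_pos hsp (sub_pos.mpr hc)]
    intro x hx
    have := hmono Set.self_mem_Ici (Set.mem_Ici.mpr hx.le) hx
    simpa [hFdef, intervalIntegral.integral_same] using this
  -- now the main function
  apply strictMonoOn_of_deriv_pos (convex_Ioi 0)
  · intro x hx
    rw [Set.mem_Ioi] at hx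
    have : ContinuousAt (fun Θ : ℝ => (1 / Θ ^ n) * F Θ) x := by
      apply ContinuousAt.mul
      · exact (continuousAt_const.div (continuousAt_pow x n) (pow_ne_zero _ hx.ne')) 
      · exact (hF x).differentiableAt.continuousAt
    exact this.continuousWithinAt
  · intro x hx
    rw [interior_Ioi, Set.mem_Ioi] at hx
    have hxn : (x : ℝ) ^ n ≠ 0 := pow_ne_zero _ hx.ne'
    have hd : HasDerivAt (fun Θ : ℝ => F Θ / Θ ^ n)
        ((Real.sinh x ^ (n - 1) * x ^ n - F x * ((n : ℝ) * x ^ (n - 1))) / (x ^ n) ^ 2) x :=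
      (hF x).div (hasDerivAt_pow n x) hxn
    have heq : (fun Θ : ℝ => (1 / Θ ^ n) * F Θ) = fun Θ : ℝ => F Θ / Θ ^ n := by
      funext Θ; ring
    rw [heq, hd.deriv]
    apply div_pos _ (pow_pos (pow_pos hx n) 2)
    have key := hG x hx
    have hx1 : x ^ n = x ^ (n - 1) * x := by
      rw [← pow_succ]
      congr 1
      omega
    have hxp : 0 < x ^ (n - 1) := pow_pos hx _
    calc (0:ℝ) < x ^ (n - 1) * (x * Real.sinh x ^ (n - 1) - n * F x) := mul_pos hxp key
      _ = Real.sinh x ^ (n - 1) * x ^ n - F x * ((n : ℝ) * x ^ (n - 1)) := by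
          rw [hx1]; ring
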